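/- For m ≥ 22 and even t ≥ 4 with m ≥ t+1, ρ(S^2_{(m+5)/2,2}) > ρ(S^t_{(m+t+3)/2,2}). -/

import Mathlib

open scoped Classical
open SimpleGraph Matrix

def ContainsCopy {α β : Type*} (H : SimpleGraph α) (G : SimpleGraph β) : Prop :=
  ∃ f : α ↪ β, ∀ a b, H.Adj a b → G.Adj (f a) (f b)

def gem : SimpleGraph (Fin 5) :=
  SimpleGraph.fromRel (fun a b => (b.val = a.val + 1 ∧ b.val ≤ 3) ∨ b = 4)

def bookS (k : ℕ) : SimpleGraph (Fin 2 ⊕ Fin k) :=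
  SimpleGraph.fromRel (fun a _ => a.isLeft = true)

def pendantS (s t : ℕ) : SimpleGraph (Fin 2 ⊕ (Fin s ⊕ Fin t)) :=
  SimpleGraph.fromRel (fun a b =>
    match a, b with
    | Sum.inl _, Sum.inl _ => True
    | Sum.inl _, Sum.inr (Sum.inl _) => True
    | Sum.inl i, Sum.inr (Sum.inr _) => i = 0
    | _, _ => False)

def starG (r : ℕ) : SimpleGraph (Fin (r + 1)) :=
  SimpleGraph.fromRel (fun a _ => a = 0)

noncomputable def specRad {V : Type*} [Fintype V] (G : SimpleGraph V) : ℝ :=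
  sSup {μ : ℝ | Module.End.HasEigenvalue (Matrix.mulVecLin (G.adjMatrix ℝ)) μ}

noncomputable def edgeCount {V : Type*} [Fintype V] (G : SimpleGraph V) : ℕ :=
  G.edgeFinset.card

noncomputable def edgesIn {V : Type*} [Fintype V] (G : SimpleGraph V) (S : Finset V) : ℕ :=
  (G.edgeFinset.filter (fun e => ∀ v ∈ e, v ∈ S)).card

noncomputable def N0 {V : Type*} [Fintype V] (G : SimpleGraph V) (u : V) : Finset V :=
  (G.neighborFinset u).filter (fun v => ∀ w ∈ G.neighborFinset u, ¬ G.Adj v w)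

noncomputable def Nplus {V : Type*} [Fintype V] (G : SimpleGraph V) (u : V) : Finset V :=
  G.neighborFinset u \ N0 G u

noncomputable def Wset {V : Type*} [Fintype V] (G : SimpleGraph V) (u : V) : Finset V :=
  Finset.univ \ insert u (G.neighborFinset u)

def InFamily (m : ℕ) {V : Type*} [Fintype V] (G : SimpleGraph V) : Prop :=
  ¬ ContainsCopy gem G ∧ edgeCount G = m ∧ (∀ v : V, ∃ w, G.Adj v w) ∧
    ¬ Nonempty (G ≃g bookS ((m - 1) / 2))

def MaxInFamily (m : ℕ) {V : Type*} [Fintype V] (G : SimpleGraph V) : Prop :=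
  InFamily m G ∧ ∀ (n : ℕ) (H : SimpleGraph (Fin n)), InFamily m H → specRad H ≤ specRad G

def IsCutVertex {V : Type*} (G : SimpleGraph V) (v : V) : Prop :=
  ∃ a b : {x : V // x ≠ v}, G.Reachable a.1 b.1 ∧
    ¬ (G.induce {x : V | x ≠ v}).Reachable a b


lemma hasEig_iff {R M : Type*} [CommRing R] [AddCommGroup M] [Module R M]
    (f : Module.End R M) (μ : R) :
    f.HasEigenvalue μ ↔ ∃ v, v ≠ 0 ∧ f v = μ • v := by
  constructor
  · intro h
    obtain ⟨v, hv⟩ := h.exists_hasEigenvector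
    exact ⟨v, hv.2, Module.End.mem_eigenspace_iff.mp hv.1⟩
  · rintro ⟨v, h0, hv⟩
    exact Module.End.hasEigenvalue_of_hasEigenvector
      ⟨Module.End.mem_eigenspace_iff.mpr hv, h0⟩

variable {n : Type*} [Fintype n] [DecidableEq n] [Nonempty n]

lemma mulVecLin_hasEig_iff (M : Matrix n n ℝ) (μ : ℝ) :
    Module.End.HasEigenvalue (Matrix.mulVecLin M) μ ↔
      Module.End.HasEigenvalue (Matrix.toEuclideanLin M) μ := by
  rw [hasEig_iff, hasEig_iff]
  constructor
  · rintro ⟨v, h0, hv⟩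
    refine ⟨(WithLp.equiv 2 (n → ℝ)).symm v, ?_, ?_⟩
    · simpa using h0
    · rw [WithLp.equiv_symm_apply, Matrix.toEuclideanLin_apply_piLp_toLp]
      rw [Matrix.mulVecLin_apply] at hv
      rw [hv]; rfl
  · rintro ⟨v, h0, hv⟩
    refine ⟨WithLp.equiv 2 (n → ℝ) v, by simpa using h0, ?_⟩
    rw [Matrix.mulVecLin_apply, WithLp.equiv_apply, ← Matrix.ofLp_toEuclideanLin_apply, hv]; rfl

noncomputable def evSet (M : Matrix n n ℝ) : Set ℝ :=
  {μ : ℝ | Module.End.HasEigenvalue (Matrix.mulVecLin M) μ}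

lemma key_spectral (M : Matrix n n ℝ) (hM : M.IsHermitian) :
    sSup (evSet M) ∈ evSet M ∧ BddAbove (evSet M) ∧
      ∀ v : n → ℝ, v ≠ 0 →
        (∑ i, (M *ᵥ v) i * v i) ≤ sSup (evSet M) * ∑ i, v i * v i := by
  classical
  set E := EuclideanSpace ℝ n with hE
  haveI : Nontrivial E := by
    refine ⟨(WithLp.equiv 2 (n → ℝ)).symm 0, (WithLp.equiv 2 (n → ℝ)).symm 1, fun h => ?_⟩
    have h2 := (WithLp.equiv 2 (n → ℝ)).symm.injective h
    exact zero_ne_one (congrFun h2 (Classical.arbitrary n))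
  set T : E →ₗ[ℝ] E := Matrix.toEuclideanLin M with hT
  have hTsymm : T.IsSymmetric := (Matrix.isHermitian_iff_isSymmetric).mp hM
  set f : {x : E // x ≠ 0} → ℝ :=
    fun x => RCLike.re (inner (𝕜 := ℝ) (T x) (x : E)) / ‖(x : E)‖ ^ 2 with hf
  set μmax : ℝ := ⨆ x : {x : E // x ≠ 0}, f x with hμ
  have hEig : Module.End.HasEigenvalue T μmax := by
    exact hTsymm.hasEigenvalue_iSup_of_finiteDimensional
  set Tcl : E →L[ℝ] E := LinearMap.toContinuousLinearMap T with hTcl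
  have hbdd : BddAbove (Set.range f) := by
    refine ⟨‖Tcl‖, ?_⟩
    rintro y ⟨⟨x, hx⟩, rfl⟩
    have hx2 : (0:ℝ) < ‖x‖ ^ 2 := pow_pos (norm_pos_iff.mpr hx) 2
    show RCLike.re (inner (𝕜 := ℝ) (T x) x) / ‖x‖ ^ 2 ≤ ‖Tcl‖
    rw [div_le_iff₀ hx2]
    have h1 : RCLike.re (inner (𝕜 := ℝ) (T x) x) ≤ ‖(inner (𝕜 := ℝ) (T x) x : ℝ)‖ :=
      le_abs_self _
    have h2 : ‖(inner (𝕜 := ℝ) (T x) x : ℝ)‖ ≤ ‖T x‖ * ‖x‖ := norm_inner_le_norm _ _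
    have h3 : ‖T x‖ ≤ ‖Tcl‖ * ‖x‖ := by
      simpa [hTcl] using Tcl.le_opNorm x
    have h4 := norm_nonneg x
    nlinarith
  have claim1 : ∀ μ ∈ evSet M, μ ≤ μmax := by
    intro μ hμ'
    rw [evSet, Set.mem_setOf_eq, mulVecLin_hasEig_iff, hasEig_iff] at hμ'
    obtain ⟨x, hx0, hx⟩ := hμ'
    have hfx : f ⟨x, hx0⟩ = μ := by
      show RCLike.re (inner (𝕜 := ℝ) (T x) x) / ‖x‖ ^ 2 = μ
      rw [hx, real_inner_smul_left, real_inner_self_eq_norm_sq]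
      have h0 : ‖x‖ ^ 2 ≠ 0 := ne_of_gt (pow_pos (norm_pos_iff.mpr hx0) 2)
      simp only [RCLike.re_to_real]
      field_simp
      rw [mul_div_assoc, div_self (norm_ne_zero_iff.mpr hx0), mul_one]
    calc μ = f ⟨x, hx0⟩ := hfx.symm
      _ ≤ μmax := le_ciSup hbdd _
  have claim2 : μmax ∈ evSet M := by
    rw [evSet, Set.mem_setOf_eq, mulVecLin_hasEig_iff]
    exact hEig
  have hsup : sSup (evSet M) = μmax :=
    le_antisymm (csSup_le ⟨μmax, claim2⟩ claim1) (le_csSup ⟨μmax, claim1⟩ claim2)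
  refine ⟨by rw [hsup]; exact claim2, ⟨μmax, claim1⟩, ?_⟩
  intro v hv
  set x : E := (WithLp.equiv 2 (n → ℝ)).symm v with hx
  have hx0 : x ≠ 0 := by
    rw [hx]; intro h; apply hv; simpa using congrArg WithLp.ofLp h
  have hfle : RCLike.re (inner (𝕜 := ℝ) (T x) x) / ‖x‖ ^ 2 ≤ μmax := le_ciSup hbdd ⟨x, hx0⟩
  have hTx : T x = (WithLp.equiv 2 (n → ℝ)).symm (M *ᵥ v) := by
    rw [hT, hx, WithLp.equiv_symm_apply, Matrix.toEuclideanLin_apply_piLp_toLp]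
  have hinner : RCLike.re (inner (𝕜 := ℝ) (T x) x) = ∑ i, (M *ᵥ v) i * v i := by
    rw [hTx, PiLp.inner_apply]
    simp [RCLike.inner_apply, hx]
    exact Finset.sum_congr rfl fun i _ => mul_comm _ _
  have hnorm : ‖x‖ ^ 2 = ∑ i, v i * v i := by
    rw [← real_inner_self_eq_norm_sq, PiLp.inner_apply]
    simp [RCLike.inner_apply, hx]
    exact Finset.sum_congr rfl fun i _ => sq _
  have hx2 : (0:ℝ) < ‖x‖ ^ 2 := pow_pos (norm_pos_iff.mpr hx0) 2
  rw [div_le_iff₀ hx2, hinner, hnorm] at hfle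
  rw [hsup]
  exact hfle

variable {a b : ℕ}

lemma pend_adj_ll (i j : Fin 2) : (pendantS a b).Adj (Sum.inl i) (Sum.inl j) ↔ i ≠ j := by
  simp [pendantS, SimpleGraph.fromRel_adj]

lemma pend_adj_lm (i : Fin 2) (j : Fin a) :
    (pendantS a b).Adj (Sum.inl i) (Sum.inr (Sum.inl j)) := by
  simp [pendantS, SimpleGraph.fromRel_adj]

lemma pend_adj_lp (i : Fin 2) (j : Fin b) :
    (pendantS a b).Adj (Sum.inl i) (Sum.inr (Sum.inr j)) ↔ i = 0 := by
  simp [pendantS, SimpleGraph.fromRel_adj]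

lemma pend_adj_rr (x y : Fin a ⊕ Fin b) : ¬ (pendantS a b).Adj (Sum.inr x) (Sum.inr y) := by
  rcases x with x | x <;> rcases y with y | y <;>
    simp [pendantS, SimpleGraph.fromRel_adj]

lemma pend_mulVec (x : Fin 2 ⊕ (Fin a ⊕ Fin b) → ℝ) (u : Fin 2 ⊕ (Fin a ⊕ Fin b)) :
    ((pendantS a b).adjMatrix ℝ *ᵥ x) u =
      ∑ w, if (pendantS a b).Adj u w then x w else 0 := by
  rw [SimpleGraph.adjMatrix_mulVec_apply]
  rw [SimpleGraph.neighborFinset_eq_filter, Finset.sum_filter]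

lemma pend_mv0 (x : Fin 2 ⊕ (Fin a ⊕ Fin b) → ℝ) :
    ((pendantS a b).adjMatrix ℝ *ᵥ x) (Sum.inl 0) =
      x (Sum.inl 1) + (∑ j, x (Sum.inr (Sum.inl j))) + ∑ j, x (Sum.inr (Sum.inr j)) := by
  rw [pend_mulVec, Fintype.sum_sum_type, Fintype.sum_sum_type, Fin.sum_univ_two]
  simp [pend_adj_ll, pend_adj_lm, pend_adj_lp]
  ring

lemma pend_mv1 (x : Fin 2 ⊕ (Fin a ⊕ Fin b) → ℝ) :
    ((pendantS a b).adjMatrix ℝ *ᵥ x) (Sum.inl 1) =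
      x (Sum.inl 0) + ∑ j, x (Sum.inr (Sum.inl j)) := by
  rw [pend_mulVec, Fintype.sum_sum_type, Fintype.sum_sum_type, Fin.sum_univ_two]
  simp [pend_adj_ll, pend_adj_lm, pend_adj_lp]

lemma pend_mvm (x : Fin 2 ⊕ (Fin a ⊕ Fin b) → ℝ) (j : Fin a) :
    ((pendantS a b).adjMatrix ℝ *ᵥ x) (Sum.inr (Sum.inl j)) =
      x (Sum.inl 0) + x (Sum.inl 1) := by
  rw [pend_mulVec, Fintype.sum_sum_type, Fin.sum_univ_two]
  have h0 : ∀ w : Fin a ⊕ Fin b,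
      ¬ (pendantS a b).Adj (Sum.inr (Sum.inl j)) (Sum.inr w) := fun w => pend_adj_rr _ _
  have h1 : (pendantS a b).Adj (Sum.inr (Sum.inl j)) (Sum.inl 0) := ((pendantS a b).adj_symm (pend_adj_lm 0 j))
  have h2 : (pendantS a b).Adj (Sum.inr (Sum.inl j)) (Sum.inl 1) := ((pendantS a b).adj_symm (pend_adj_lm 1 j))
  simp [h0, h1, h2]

lemma pend_mvp (x : Fin 2 ⊕ (Fin a ⊕ Fin b) → ℝ) (j : Fin b) :
    ((pendantS a b).adjMatrix ℝ *ᵥ x) (Sum.inr (Sum.inr j)) = x (Sum.inl 0) := by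
  rw [pend_mulVec, Fintype.sum_sum_type, Fin.sum_univ_two]
  have h0 : ∀ w : Fin a ⊕ Fin b,
      ¬ (pendantS a b).Adj (Sum.inr (Sum.inr j)) (Sum.inr w) := fun w => pend_adj_rr _ _
  have h1 : (pendantS a b).Adj (Sum.inr (Sum.inr j)) (Sum.inl 0) :=
    ((pendantS a b).adj_symm ((pend_adj_lp 0 j).mpr rfl))
  have h2 : ¬ (pendantS a b).Adj (Sum.inr (Sum.inr j)) (Sum.inl 1) := by
    intro h
    have := (pend_adj_lp 1 j).mp ((pendantS a b).adj_symm h)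
    exact absurd this (by decide)
  simp [h0, h1, h2]

lemma eig_poly (μ : ℝ) (hμ : 0 < μ)
    (h : Module.End.HasEigenvalue (Matrix.mulVecLin ((pendantS a b).adjMatrix ℝ)) μ) :
    (μ^2 - a) * (μ^2 - a - b) = (μ + a)^2 := by
  rw [hasEig_iff] at h
  obtain ⟨v, hv0, hv⟩ := h
  rw [Matrix.mulVecLin_apply] at hv
  set A : ℝ := (a : ℝ) with hA
  set B : ℝ := (b : ℝ) with hB
  have hA0 : 0 ≤ A := Nat.cast_nonneg a
  have hB0 : 0 ≤ B := Nat.cast_nonneg b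
  set P := v (Sum.inl 0) with hP
  set Q := v (Sum.inl 1) with hQ
  set R := ∑ j, v (Sum.inr (Sum.inl j)) with hR
  set W := ∑ j, v (Sum.inr (Sum.inr j)) with hW
  have e0 : Q + R + W = μ * P := by
    have := congrFun hv (Sum.inl 0)
    rw [pend_mv0] at this
    simpa [Pi.smul_apply] using this
  have e1 : P + R = μ * Q := by
    have := congrFun hv (Sum.inl 1)
    rw [pend_mv1] at this
    simpa [Pi.smul_apply] using this
  have em : ∀ j : Fin a, P + Q = μ * v (Sum.inr (Sum.inl j)) := by
    intro j
    have := congrFun hv (Sum.inr (Sum.inl j))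
    rw [pend_mvm] at this
    simpa [Pi.smul_apply] using this
  have ep : ∀ j : Fin b, P = μ * v (Sum.inr (Sum.inr j)) := by
    intro j
    have := congrFun hv (Sum.inr (Sum.inr j))
    rw [pend_mvp] at this
    simpa [Pi.smul_apply] using this
  have eR : μ * R = A * (P + Q) := by
    rw [hR, Finset.mul_sum]
    have : ∀ j ∈ Finset.univ, μ * v (Sum.inr (Sum.inl j)) = P + Q := fun j _ => (em j).symm
    rw [Finset.sum_congr rfl this, Finset.sum_const, Finset.card_univ, Fintype.card_fin,
      nsmul_eq_mul, hA]
  have eW : μ * W = B * P := by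
    rw [hW, Finset.mul_sum]
    have : ∀ j ∈ Finset.univ, μ * v (Sum.inr (Sum.inr j)) = P := fun j _ => (ep j).symm
    rw [Finset.sum_congr rfl this, Finset.sum_const, Finset.card_univ, Fintype.card_fin,
      nsmul_eq_mul, hB]
  have hμ0 : μ ≠ 0 := ne_of_gt hμ
  -- either P or Q nonzero
  have hPQ : P ≠ 0 ∨ Q ≠ 0 := by
    by_contra hcon
    push_neg at hcon
    obtain ⟨hP0, hQ0⟩ := hcon
    apply hv0
    funext u
    rcases u with i | (j | j)
    · fin_cases i
      · exact hP0
      · exact hQ0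
    · have := em j
      rw [hP0, hQ0] at this
      have : μ * v (Sum.inr (Sum.inl j)) = 0 := by linarith
      simpa [hμ0] using this
    · have := ep j
      rw [hP0] at this
      have : μ * v (Sum.inr (Sum.inr j)) = 0 := by linarith
      simpa [hμ0] using this
  -- the two key scalar identities
  have E1 : Q * (μ^2 - A) = P * (μ + A) := by
    have h1 : μ * (P + R) = μ * (μ * Q) := by rw [e1]
    nlinarith [eR, h1]
  have E2 : P * (μ^2 - A - B) = Q * (μ + A) := by
    have h1 : μ * (Q + R + W) = μ * (μ * P) := by rw [e0]
    nlinarith [eR, eW, h1]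
  have hμA : 0 < μ + A := by linarith
  have hPne : P ≠ 0 := by
    intro hP0
    have hQ0 : Q = 0 := by
      have := E2
      rw [hP0] at this
      have : Q * (μ + A) = 0 := by linarith
      rcases mul_eq_zero.mp this with h | h
      · exact h
      · exact absurd h (ne_of_gt hμA)
    rcases hPQ with h | h
    · exact h hP0
    · exact h hQ0
  have hQne : Q ≠ 0 := by
    intro hQ0
    have := E1
    rw [hQ0] at this
    have hz : P * (μ + A) = 0 := by linarith
    rcases mul_eq_zero.mp hz with h | h
    · exact hPne h
    · exact absurd h (ne_of_gt hμA)
  have key : ((μ^2 - A) * (μ^2 - A - B) - (μ + A)^2) * (P * Q) = 0 := by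
    linear_combination (P * (μ^2 - A - B)) * E1 + (P * (μ + A)) * E2
  rcases mul_eq_zero.mp key with h | h
  · linarith
  · exact absurd h (mul_ne_zero hPne hQne)

lemma root_eig (z : ℝ) (hz : 0 < z) (hz2 : (a : ℝ) < z^2)
    (hroot : (z^2 - a) * (z^2 - a - 2) = (z + a)^2) :
    Module.End.HasEigenvalue (Matrix.mulVecLin ((pendantS a 2).adjMatrix ℝ)) z := by
  set A : ℝ := (a : ℝ) with hA
  set v : Fin 2 ⊕ (Fin a ⊕ Fin 2) → ℝ :=
    Sum.elim (fun i => if i = 0 then z * (z^2 - A) else z * (z + A))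
      (Sum.elim (fun _ => z^2 + z) (fun _ => z^2 - A)) with hvdef
  rw [hasEig_iff]
  refine ⟨v, ?_, ?_⟩
  · intro h
    have := congrFun h (Sum.inl 0)
    simp only [hvdef, Sum.elim_inl, if_pos rfl, Pi.zero_apply] at this
    have hzA : z * (z^2 - A) ≠ 0 := mul_ne_zero (ne_of_gt hz) (by nlinarith)
    exact hzA this
  · rw [Matrix.mulVecLin_apply]
    funext u
    rcases u with i | (j | j)
    · fin_cases i
      · show (adjMatrix ℝ (pendantS a 2) *ᵥ v) (Sum.inl 0) = (z • v) (Sum.inl 0)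
        rw [pend_mv0]
        simp [hvdef, Finset.card_univ]
        push_cast
        ring_nf
        ring_nf at hroot
        linarith [hroot]
      · show (adjMatrix ℝ (pendantS a 2) *ᵥ v) (Sum.inl 1) = (z • v) (Sum.inl 1)
        rw [pend_mv1]
        simp [hvdef, Finset.card_univ]
        try push_cast
        try linear_combination hroot
        try ring
    · rw [pend_mvm]
      simp [hvdef]
      try push_cast
      try ring
    · rw [pend_mvp]
      simp [hvdef]
      try push_cast
      try ring

lemma rayleigh_bounds (S T c lam : ℝ) (hS : 0 ≤ S) (hT : 4 ≤ T)
    (hc2 : c^2 = S + T + 1) (hc0 : 0 < c)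
    (hray : 2*c*(S+T+1) + 2*S ≤ lam * (c^2 + 1 + S + T)) :
    0 < lam ∧ 1 < lam ∧ S + T + 1 ≤ lam^2 := by
  have hK : (0:ℝ) < S + T + 1 := by linarith
  have hclam : c ≤ lam := by nlinarith [hray, hc2, hK, hS]
  have h0 : 0 < lam := lt_of_lt_of_le hc0 hclam
  have h2 : S + T + 1 ≤ lam^2 := by
    have hcc := mul_le_mul hclam hclam hc0.le h0.le
    nlinarith [hcc, hc2]
  have h1 : 1 < lam := by nlinarith [h2, h0, hS, hT]
  exact ⟨h0, h1, h2⟩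

lemma main_ineq (S S' D T lam : ℝ)
    (hS : 0 ≤ S) (hS' : S' = S + D) (hT : T = 2*D + 2) (hD : 1 ≤ D)
    (hlam0 : 0 < lam) (hlam1 : 1 < lam) (hlam2 : S + T + 1 ≤ lam^2)
    (hF1 : (lam^2 - S) * (lam^2 - S - T) = (lam + S)^2) :
    ∃ z : ℝ, lam < z ∧ 0 < z ∧ S' < z^2 ∧
      (z^2 - S') * (z^2 - S' - 2) = (z + S')^2 := by
  have hS'0 : 0 ≤ S' := by linarith
  have hfl : (lam^2 - S') * (lam^2 - S' - 2) - (lam + S')^2 < 0 := by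
    have heq : (lam^2 - S') * (lam^2 - S' - 2) - (lam + S')^2
        = 2*D*(1 - lam - S) := by
      rw [hS', hT] at *
      linear_combination hF1
    rw [heq]
    have hpos : 0 < D * (lam + S - 1) := by
      apply mul_pos (by linarith) (by linarith)
    linarith
  set X : ℝ := lam + S' + 3 with hX
  have hX1 : 1 < X := by linarith
  have hfX : 0 < (X^2 - S') * (X^2 - S' - 2) - (X + S')^2 := by
    have h1 : 2*X + 1 ≤ X^2 - S' - 2 := by
      nlinarith [mul_nonneg hlam0.le hS'0, sq_nonneg S', hS'0, hlam0.le, hlam1]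
    have h2 : 2*X + 3 ≤ X^2 - S' := by linarith
    have h3 : X + S' ≤ 2*X - 3 := by linarith
    have ha : 0 ≤ X^2 - S' - (2*X+3) := by linarith
    have hb : 0 ≤ X^2 - S' - 2 - (2*X+1) := by linarith
    have hp : (2*X+3)*(2*X+1) ≤ (X^2 - S') * (X^2 - S' - 2) := by
      nlinarith [mul_nonneg ha hb, mul_nonneg (show (0:ℝ) ≤ 2*X+3 by linarith) hb,
        mul_nonneg ha (show (0:ℝ) ≤ 2*X+1 by linarith)]
    have hq : (X + S')^2 ≤ (2*X - 3)^2 := by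
      apply pow_le_pow_left₀ (by linarith) h3
    nlinarith [hp, hq, hX1]
  have hlamX : lam ≤ X := by linarith
  have hcont : ContinuousOn (fun x : ℝ => (x^2 - S') * (x^2 - S' - 2) - (x + S')^2)
      (Set.Icc lam X) := by
    apply Continuous.continuousOn
    continuity
  have h0mem : (0:ℝ) ∈ Set.Icc
      ((lam^2 - S') * (lam^2 - S' - 2) - (lam + S')^2)
      ((X^2 - S') * (X^2 - S' - 2) - (X + S')^2) :=
    ⟨le_of_lt hfl, le_of_lt hfX⟩
  obtain ⟨z, hzmem, hfz⟩ := intermediate_value_Icc hlamX hcont h0mem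
  simp only at hfz
  have hzlam : lam < z := by
    rcases lt_or_eq_of_le hzmem.1 with h | h
    · exact h
    · exfalso; rw [← h] at hfz; rw [hfz] at hfl; exact lt_irrefl 0 hfl
  have hz0 : (0:ℝ) < z := lt_trans hlam0 hzlam
  have hz2 : S' < z^2 := by
    have hzz : lam^2 < z^2 := by
      nlinarith [mul_pos (sub_pos.mpr hzlam) (show 0 < z + lam by linarith)]
    linarith
  exact ⟨z, hzlam, hz0, hz2, by linarith⟩

theorem stmt4 (m t : ℕ) (hm : 22 ≤ m) (hodd : Odd m) (ht : Even t) (ht4 : 4 ≤ t)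
    (hmt : t + 1 ≤ m) :
    specRad (pendantS ((m - t - 1) / 2) t) < specRad (pendantS ((m - 3) / 2) 2) := by
  have hm2 : m % 2 = 1 := Nat.odd_iff.mp hodd
  have ht2 : t % 2 = 0 := Nat.even_iff.mp ht
  set s : ℕ := (m - t - 1) / 2 with hs
  set s' : ℕ := (m - 3) / 2 with hs'
  set d : ℕ := (t - 2) / 2 with hd
  have n1 : 2 * s + t + 1 = m := by omega
  have n3 : 2 * d + 2 = t := by omega
  have n4 : 1 ≤ d := by omega
  have n5 : s' = s + d := by omega
  clear_value s s' d
  have rA' : (s' : ℝ) = (s : ℝ) + (d : ℝ) := by exact_mod_cast congrArg (Nat.cast (R := ℝ)) n5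
  have rT : (t : ℝ) = 2 * (d : ℝ) + 2 := by exact_mod_cast (congrArg (Nat.cast (R := ℝ)) n3).symm
  have hA0 : (0:ℝ) ≤ (s : ℝ) := Nat.cast_nonneg s
  have hD1 : (1:ℝ) ≤ (d : ℝ) := by exact_mod_cast n4
  have hT4 : (4:ℝ) ≤ (t : ℝ) := by exact_mod_cast ht4
  -- graph 1
  set M1 := (pendantS s t).adjMatrix ℝ with hM1
  have hH1 : M1.IsHermitian := by
    rw [Matrix.IsHermitian, Matrix.conjTranspose_eq_transpose_of_trivial]
    exact SimpleGraph.isSymm_adjMatrix _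
  obtain ⟨hmem1, hbdd1, hray1⟩ := key_spectral M1 hH1
  set lam := sSup (evSet M1) with hlam
  clear_value lam
  -- Rayleigh lower bound
  set c : ℝ := Real.sqrt ((s:ℝ) + (t:ℝ) + 1) with hc
  have hATpos : (0:ℝ) < (s:ℝ) + (t:ℝ) + 1 := by positivity
  have hc2 : c^2 = (s:ℝ) + (t:ℝ) + 1 := Real.sq_sqrt (le_of_lt hATpos)
  have hc0 : 0 < c := Real.sqrt_pos.mpr hATpos
  set v0 : Fin 2 ⊕ (Fin s ⊕ Fin t) → ℝ :=
    Sum.elim (fun i => if i = 0 then c else 1) (fun _ => 1) with hv0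
  have hv00 : v0 ≠ 0 := by
    intro h
    have := congrFun h (Sum.inl 1)
    simp [hv0] at this
  have hsum1 : ∑ i, (M1 *ᵥ v0) i * v0 i = 2*c*((s:ℝ)+(t:ℝ)+1) + 2*(s:ℝ) := by
    rw [Fintype.sum_sum_type, Fintype.sum_sum_type, Fin.sum_univ_two, hM1,
      pend_mv0, pend_mv1]
    have hmid : ∀ j : Fin s,
        ((pendantS s t).adjMatrix ℝ *ᵥ v0) (Sum.inr (Sum.inl j)) * v0 (Sum.inr (Sum.inl j))
          = c + 1 := by
      intro j; rw [pend_mvm]; simp [hv0]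
    have hpend : ∀ j : Fin t,
        ((pendantS s t).adjMatrix ℝ *ᵥ v0) (Sum.inr (Sum.inr j)) * v0 (Sum.inr (Sum.inr j))
          = c := by
      intro j; rw [pend_mvp]; simp [hv0]
    rw [Finset.sum_congr rfl (fun j _ => hmid j), Finset.sum_congr rfl (fun j _ => hpend j)]
    simp [hv0, Finset.sum_const, Finset.card_univ]
    push_cast
    ring
  have hsum2 : ∑ i, v0 i * v0 i = c^2 + 1 + (s:ℝ) + (t:ℝ) := by
    rw [Fintype.sum_sum_type, Fintype.sum_sum_type, Fin.sum_univ_two]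
    simp [hv0, Finset.sum_const, Finset.card_univ]
    push_cast
    ring
  have hray := hray1 v0 hv00
  rw [hsum1, hsum2] at hray
  obtain ⟨hlam0, hlam1, hlam2⟩ :=
    rayleigh_bounds (s:ℝ) (t:ℝ) c lam hA0 hT4 hc2 hc0 hray
  have hF1 : (lam^2 - (s:ℝ)) * (lam^2 - (s:ℝ) - (t:ℝ)) = (lam + (s:ℝ))^2 :=
    eig_poly lam hlam0 hmem1
  obtain ⟨z, hzlam, hz0, hz2, hroot⟩ :=
    main_ineq (s:ℝ) (s':ℝ) (d:ℝ) (t:ℝ) lam hA0 rA' rT hD1 hlam0 hlam1 hlam2 hF1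
  have hEz := root_eig (a := s') z hz0 hz2 hroot
  set M2 := (pendantS s' 2).adjMatrix ℝ with hM2
  have hH2 : M2.IsHermitian := by
    rw [Matrix.IsHermitian, Matrix.conjTranspose_eq_transpose_of_trivial]
    exact SimpleGraph.isSymm_adjMatrix _
  obtain ⟨hmem2, hbdd2, _⟩ := key_spectral M2 hH2
  have hzmem2 : z ∈ evSet M2 := hEz
  have hzle : z ≤ sSup (evSet M2) := le_csSup hbdd2 hzmem2
  have hfin : lam < sSup (evSet M2) := lt_of_lt_of_le hzlam hzle
  rw [hlam] at hfin
  exact hfin
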